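/- Let a, b, c ∈ ℂ with a ≠ 0, and suppose the two roots z₁, z₂ (with multiplicity) of P = aX² + bX + c satisfy |z₁| ≤ 1 and |z₂| ≤ 1. Then the Hermitian form q_d on ℂ² defined by q_d(x₁,x₂) := (|a|²−|c|²)·|x₂|² + 2·Re( conj(a·x₂)·b·x₁ ) − 2·Re( conj(b·x₂)·c·x₁ ) + (|a|²−|c|²)·|x₁|² is nonnegative. -/

import Mathlib

/-- nonnegativity of the dissipation form `q_d` for a degree-2
polynomial `P = aX² + bX + c` whose roots `z₁, z₂` lie in the closed unit disk. -/
theorem stmt_10 (a b c z₁ z₂ : ℂ) (ha : a ≠ 0)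
    (hb : a * (z₁ + z₂) = -b) (hc : a * z₁ * z₂ = c)
    (hz₁ : ‖z₁‖ ≤ 1) (hz₂ : ‖z₂‖ ≤ 1) :
    ∀ x₁ x₂ : ℂ,
      0 ≤ (‖a‖ ^ 2 - ‖c‖ ^ 2) * ‖x₂‖ ^ 2
            + 2 * ((starRingEnd ℂ) (a * x₂) * (b * x₁)).re
            - 2 * ((starRingEnd ℂ) (b * x₂) * (c * x₁)).re
            + (‖a‖ ^ 2 - ‖c‖ ^ 2) * ‖x₁‖ ^ 2 := by
  intro x₁ x₂
  have hb' : b = -(a * (z₁ + z₂)) := by linear_combination hb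
  have hc' : c = a * z₁ * z₂ := hc.symm
  subst hb' hc'
  have key : 2 * ((‖a‖ ^ 2 - ‖a * z₁ * z₂‖ ^ 2) * ‖x₂‖ ^ 2
            + 2 * ((starRingEnd ℂ) (a * x₂) * (-(a * (z₁ + z₂)) * x₁)).re
            - 2 * ((starRingEnd ℂ) (-(a * (z₁ + z₂)) * x₂) * (a * z₁ * z₂ * x₁)).re
            + (‖a‖ ^ 2 - ‖a * z₁ * z₂‖ ^ 2) * ‖x₁‖ ^ 2)
      = Complex.normSq a *
          ((1 - Complex.normSq z₁) *
              (Complex.normSq (z₂ * x₁ - x₂) + Complex.normSq (x₁ - (starRingEnd ℂ) z₂ * x₂))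
            + (1 - Complex.normSq z₂) *
              (Complex.normSq (z₁ * x₁ - x₂) + Complex.normSq (x₁ - (starRingEnd ℂ) z₁ * x₂))) := by
    simp only [Complex.sq_norm, Complex.normSq_apply, Complex.mul_re, Complex.mul_im,
      Complex.sub_re, Complex.sub_im, Complex.add_re, Complex.add_im, Complex.neg_re,
      Complex.neg_im, Complex.conj_re, Complex.conj_im]
    ring
  have h1 : Complex.normSq z₁ ≤ 1 := by
    have := Complex.sq_norm z₁
    nlinarith [norm_nonneg z₁]
  have h2 : Complex.normSq z₂ ≤ 1 := by
    have := Complex.sq_norm z₂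
    nlinarith [norm_nonneg z₂]
  nlinarith [Complex.normSq_nonneg a, Complex.normSq_nonneg (z₂ * x₁ - x₂),
    Complex.normSq_nonneg (x₁ - (starRingEnd ℂ) z₂ * x₂),
    Complex.normSq_nonneg (z₁ * x₁ - x₂),
    Complex.normSq_nonneg (x₁ - (starRingEnd ℂ) z₁ * x₂),
    mul_nonneg (mul_nonneg (Complex.normSq_nonneg a) (by linarith : (0:ℝ) ≤ 1 - Complex.normSq z₁))
      (add_nonneg (Complex.normSq_nonneg (z₂ * x₁ - x₂)) (Complex.normSq_nonneg (x₁ - (starRingEnd ℂ) z₂ * x₂))),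
    mul_nonneg (mul_nonneg (Complex.normSq_nonneg a) (by linarith : (0:ℝ) ≤ 1 - Complex.normSq z₂))
      (add_nonneg (Complex.normSq_nonneg (z₁ * x₁ - x₂)) (Complex.normSq_nonneg (x₁ - (starRingEnd ℂ) z₁ * x₂)))]
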